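/- For every t, ‖v_t^Q − v_t*‖² ≤ c₂ ‖y_{t+1} − y_t*‖² + ε_t², where c₂ := (1 + 1/(λμ_g)) C_Q² and ε_t² := (1 + λμ_g)(1 − λμ_g)^{2Q_t}(2‖v⁰‖² + 2M_v²); moreover the error sequence decays: ε_{t+1}² ≤ (1 − αμ_g/2) ε_t² for every t. -/

import Mathlib

set_option maxHeartbeats 1000000


/-- the conjugate-gradient error bound squared, and decay of the
error sequence `ε_t² := (1+λμ_g)(1-λμ_g)^{2Q_t}(2‖v⁰‖² + 2M_v²)`, with
`c₂ := (1 + 1/(λμ_g)) C_Q²`.  Real exponents are interpreted as `rpow`. -/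
theorem cg_error_bound_and_decay
    {F : Type*} [NormedAddCommGroup F] [InnerProductSpace ℝ F] [FiniteDimensional ℝ F]
    (μg lam α CQ Mv : ℝ)
    (hμg : 0 < μg) (hlam : 0 < lam) (hlamμ : lam * μg < 1)
    (hα : 0 < α) (hαμ : α * μg < 2) (hCQ : 0 < CQ) (hMv : 0 < Mv)
    (v0 : F) (Q : ℕ → ℝ) (hQ0 : ∀ t, 0 ≤ Q t)
    (hQgap : ∀ t, Real.log (1 - α * μg / 2) / (2 * Real.log (1 - lam * μg)) ≤ Q (t + 1) - Q t)
    (vstar vQ ystar ynext : ℕ → F)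
    (hvstar : ∀ t, ‖vstar t‖ ≤ Mv)
    (hcg : ∀ t, ‖vQ t - vstar t‖ ≤
      CQ * ‖ystar t - ynext t‖ + (1 - lam * μg) ^ (Q t) * ‖v0 - vstar t‖) :
    (∀ t, ‖vQ t - vstar t‖ ^ 2 ≤
        (1 + 1 / (lam * μg)) * CQ ^ 2 * ‖ynext t - ystar t‖ ^ 2
          + (1 + lam * μg) * (1 - lam * μg) ^ (2 * Q t) * (2 * ‖v0‖ ^ 2 + 2 * Mv ^ 2)) ∧
      (∀ t, (1 + lam * μg) * (1 - lam * μg) ^ (2 * Q (t + 1)) * (2 * ‖v0‖ ^ 2 + 2 * Mv ^ 2)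
          ≤ (1 - α * μg / 2) *
            ((1 + lam * μg) * (1 - lam * μg) ^ (2 * Q t) * (2 * ‖v0‖ ^ 2 + 2 * Mv ^ 2))) := by

  have hρ : 0 < lam * μg := mul_pos hlam hμg
  have hb0 : 0 < 1 - lam * μg := by linarith
  have hb1 : 1 - lam * μg < 1 := by linarith
  constructor
  · intro t
    set a := CQ * ‖ystar t - ynext t‖ with ha_def
    set c := (1 - lam * μg) ^ (Q t) * ‖v0 - vstar t‖ with hc_def
    have ha : 0 ≤ a := mul_nonneg hCQ.le (norm_nonneg _)
    have hc : 0 ≤ c := mul_nonneg (Real.rpow_nonneg hb0.le _) (norm_nonneg _)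
    have h1 : ‖vQ t - vstar t‖ ^ 2 ≤ (a + c) ^ 2 := by
      have h := hcg t
      have hn := norm_nonneg (vQ t - vstar t)
      nlinarith
    have key2 : 2 * a * c ≤ (1 / (lam * μg)) * a ^ 2 + (lam * μg) * c ^ 2 := by
      rw [show (1 / (lam * μg)) * a ^ 2 + (lam * μg) * c ^ 2
          = (a ^ 2 + (lam * μg) ^ 2 * c ^ 2) / (lam * μg) from by field_simp,
        le_div_iff₀ hρ]
      nlinarith [sq_nonneg (a - lam * μg * c)]
    have key : (a + c) ^ 2 ≤ (1 + 1 / (lam * μg)) * a ^ 2 + (1 + lam * μg) * c ^ 2 := by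
      nlinarith
    have hsq : (1 - lam * μg) ^ (2 * Q t) = ((1 - lam * μg) ^ (Q t)) ^ 2 := by
      rw [show (2:ℝ) * Q t = Q t * 2 from mul_comm _ _, Real.rpow_mul hb0.le,
        ← Real.rpow_natCast ((1 - lam * μg) ^ (Q t)) 2]
      norm_num
    have hv : ‖v0 - vstar t‖ ^ 2 ≤ 2 * ‖v0‖ ^ 2 + 2 * Mv ^ 2 := by
      have h2 : ‖v0 - vstar t‖ ≤ ‖v0‖ + ‖vstar t‖ := norm_sub_le _ _
      have h3 := hvstar t
      have h4 := norm_nonneg (v0 - vstar t)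
      have h5 := norm_nonneg (vstar t)
      nlinarith [mul_self_le_mul_self h4 h2, sq_nonneg (‖v0‖ - ‖vstar t‖)]
    have hc2 : c ^ 2 ≤ (1 - lam * μg) ^ (2 * Q t) * (2 * ‖v0‖ ^ 2 + 2 * Mv ^ 2) := by
      rw [hc_def, mul_pow, hsq]
      have hp : 0 ≤ ((1 - lam * μg) ^ (Q t)) ^ 2 := sq_nonneg _
      exact mul_le_mul_of_nonneg_left hv hp
    have ha2 : a ^ 2 = CQ ^ 2 * ‖ynext t - ystar t‖ ^ 2 := by
      rw [ha_def, mul_pow, norm_sub_rev]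
    have hco : (0:ℝ) ≤ 1 + lam * μg := by linarith
    calc ‖vQ t - vstar t‖ ^ 2 ≤ (a + c) ^ 2 := h1
      _ ≤ (1 + 1 / (lam * μg)) * a ^ 2 + (1 + lam * μg) * c ^ 2 := key
      _ ≤ (1 + 1 / (lam * μg)) * CQ ^ 2 * ‖ynext t - ystar t‖ ^ 2
          + (1 + lam * μg) * (1 - lam * μg) ^ (2 * Q t) * (2 * ‖v0‖ ^ 2 + 2 * Mv ^ 2) := by
        have h6 : (1 + 1 / (lam * μg)) * a ^ 2
            = (1 + 1 / (lam * μg)) * CQ ^ 2 * ‖ynext t - ystar t‖ ^ 2 := by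
          rw [ha2]; ring
        have h7 : (1 + lam * μg) * c ^ 2
            ≤ (1 + lam * μg) * ((1 - lam * μg) ^ (2 * Q t) * (2 * ‖v0‖ ^ 2 + 2 * Mv ^ 2)) :=
          mul_le_mul_of_nonneg_left hc2 hco
        linarith
  · intro t
    have hs0 : 0 < 1 - α * μg / 2 := by nlinarith
    have hs1 : 1 - α * μg / 2 < 1 := by nlinarith
    have hlogb : Real.log (1 - lam * μg) < 0 := Real.log_neg hb0 hb1
    have hlogs : Real.log (1 - α * μg / 2) < 0 := Real.log_neg hs0 hs1
    have hgap := hQgap t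
    have hmul : 2 * (Q (t + 1) - Q t) * Real.log (1 - lam * μg)
        ≤ Real.log (1 - α * μg / 2) := by
      have h2l : 2 * Real.log (1 - lam * μg) < 0 := by linarith
      rw [div_le_iff_of_neg h2l] at hgap
      nlinarith [hgap]
    have hstep : (1 - lam * μg) ^ (2 * (Q (t + 1) - Q t)) ≤ 1 - α * μg / 2 := by
      rw [Real.rpow_def_of_pos hb0]
      rw [mul_comm]
      calc Real.exp (2 * (Q (t + 1) - Q t) * Real.log (1 - lam * μg))
          ≤ Real.exp (Real.log (1 - α * μg / 2)) := Real.exp_le_exp.mpr hmul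
        _ = 1 - α * μg / 2 := Real.exp_log hs0
    have hsplit : (1 - lam * μg) ^ (2 * Q (t + 1))
        = (1 - lam * μg) ^ (2 * Q t) * (1 - lam * μg) ^ (2 * (Q (t + 1) - Q t)) := by
      rw [← Real.rpow_add hb0]
      ring_nf
    have hbase : 0 ≤ (1 - lam * μg) ^ (2 * Q t) := Real.rpow_nonneg hb0.le _
    have hmain : (1 - lam * μg) ^ (2 * Q (t + 1))
        ≤ (1 - α * μg / 2) * (1 - lam * μg) ^ (2 * Q t) := by
      rw [hsplit]
      calc (1 - lam * μg) ^ (2 * Q t) * (1 - lam * μg) ^ (2 * (Q (t + 1) - Q t))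
          ≤ (1 - lam * μg) ^ (2 * Q t) * (1 - α * μg / 2) :=
            mul_le_mul_of_nonneg_left hstep hbase
        _ = (1 - α * μg / 2) * (1 - lam * μg) ^ (2 * Q t) := by ring
    have hK : (0:ℝ) ≤ (1 + lam * μg) * (2 * ‖v0‖ ^ 2 + 2 * Mv ^ 2) := by positivity
    nlinarith [mul_le_mul_of_nonneg_left hmain hK]
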